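/- For an n×T real matrix Y, the two-step reconciled matrix vanishes, M_cs · Y · M_teᵀ = 0, if and only if there exist an n_a×T matrix A and an n×k matrix B such that Y = W·U·A + B·Zᵀ·Ω (where Ω is symmetric). That is, the kernel of the map Y ↦ M_cs·Y·M_teᵀ equals the sum of the column space of WU (acting on rows) and the column space of ΩZ (acting on columns). -/

import Mathlib

open Matrix

/-- M_cs · Y · M_teᵀ = 0 iff Y = W·U·A + B·Zᵀ·Ω for some matrices
A, B; i.e. the kernel of Y ↦ M_cs·Y·M_teᵀ is the sum of the column space of WU
(acting on rows) and the column space of ΩZ (acting on columns). -/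
theorem stmt_7 {n na T k : ℕ}
    (W : Matrix (Fin n) (Fin n) ℝ) (hW : W.PosDef)
    (U : Matrix (Fin n) (Fin na) ℝ) (hU : IsUnit (Uᵀ * W * U))
    (Ω : Matrix (Fin T) (Fin T) ℝ) (hΩ : Ω.PosDef)
    (Z : Matrix (Fin T) (Fin k) ℝ) (hZ : IsUnit (Zᵀ * Ω * Z))
    (Mcs : Matrix (Fin n) (Fin n) ℝ) (hMcs : Mcs = 1 - W * U * (Uᵀ * W * U)⁻¹ * Uᵀ)
    (Mte : Matrix (Fin T) (Fin T) ℝ) (hMte : Mte = 1 - Ω * Z * (Zᵀ * Ω * Z)⁻¹ * Zᵀ)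
    (Y : Matrix (Fin n) (Fin T) ℝ) :
    Mcs * Y * Mteᵀ = 0 ↔
      ∃ (A : Matrix (Fin na) (Fin T) ℝ) (B : Matrix (Fin n) (Fin k) ℝ),
        Y = W * U * A + B * Zᵀ * Ω := by
  have hΩsymm : Ωᵀ = Ω := by
    have := hΩ.isHermitian
    simpa [Matrix.IsHermitian, Matrix.conjTranspose_eq_transpose_of_trivial] using this
  have hUdet : IsUnit (Uᵀ * W * U).det := (Matrix.isUnit_iff_isUnit_det _).mp hU
  have hZdet : IsUnit (Zᵀ * Ω * Z).det := (Matrix.isUnit_iff_isUnit_det _).mp hZ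
  have hGsymm : (Zᵀ * Ω * Z)ᵀ = Zᵀ * Ω * Z := by
    simp [Matrix.transpose_mul, hΩsymm, Matrix.mul_assoc]
  have hMte' : Mteᵀ = 1 - Z * (Zᵀ * Ω * Z)⁻¹ * Zᵀ * Ω := by
    rw [hMte]
    simp [Matrix.transpose_sub, Matrix.transpose_mul, Matrix.transpose_nonsing_inv,
      hGsymm, hΩsymm, Matrix.mul_assoc]
  have hMcsWU : Mcs * (W * U) = 0 := by
    have h1 : W * U * ((Uᵀ * W * U)⁻¹ * (Uᵀ * W * U)) = W * U := by
      rw [Matrix.nonsing_inv_mul _ hUdet, Matrix.mul_one]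
    rw [hMcs, Matrix.sub_mul, Matrix.one_mul]
    rw [show W * U * (Uᵀ * W * U)⁻¹ * Uᵀ * (W * U)
        = W * U * ((Uᵀ * W * U)⁻¹ * (Uᵀ * W * U)) by
      simp only [Matrix.mul_assoc], h1, sub_self]
  have hZΩMte : (Zᵀ * Ω) * Mteᵀ = 0 := by
    have h1 : Zᵀ * Ω * Z * (Zᵀ * Ω * Z)⁻¹ = 1 := Matrix.mul_nonsing_inv _ hZdet
    rw [hMte', Matrix.mul_sub, Matrix.mul_one]
    rw [show Zᵀ * Ω * (Z * (Zᵀ * Ω * Z)⁻¹ * Zᵀ * Ω)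
        = Zᵀ * Ω * Z * (Zᵀ * Ω * Z)⁻¹ * (Zᵀ * Ω) by
      simp only [Matrix.mul_assoc], h1, Matrix.one_mul, sub_self]
  constructor
  · intro h
    refine ⟨(Uᵀ * W * U)⁻¹ * (Uᵀ * Y), Mcs * Y * (Z * (Zᵀ * Ω * Z)⁻¹), ?_⟩
    have key : W * U * ((Uᵀ * W * U)⁻¹ * (Uᵀ * Y))
        + Mcs * Y * (Z * (Zᵀ * Ω * Z)⁻¹) * Zᵀ * Ω
        = Y - Mcs * Y * Mteᵀ := by
      rw [hMcs, hMte']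
      simp only [Matrix.mul_sub, Matrix.sub_mul, Matrix.mul_one, Matrix.one_mul,
        Matrix.mul_assoc]
      abel
    rw [key, h, sub_zero]
  · rintro ⟨A, B, rfl⟩
    have expand : Mcs * (W * U * A + B * Zᵀ * Ω) * Mteᵀ
        = Mcs * (W * U) * (A * Mteᵀ) + Mcs * B * ((Zᵀ * Ω) * Mteᵀ) := by
      simp only [Matrix.mul_add, Matrix.add_mul, Matrix.mul_assoc]
    rw [expand, hMcsWU, hZΩMte]
    simp
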